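/- Consider a diagnostic classification model for J binary items with K binary attributes: the latent classes are the attribute profiles α = (α₁,…,α_K) ∈ {0,1}^K, with class proportions π_α and conditional positive response probabilities p_{jα} ∈ [0,1]. Suppose there are three pairwise disjoint sets of K items each such that, for every attribute k = 1,…,K, each of the three sets contains an item j for which p_{jα} depends on α only through α_k and takes two distinct values (its value when α_k = 0 differs from its value when α_k = 1); this corresponds to the Q-matrix containing three distinct K×K identity submatrices after rearranging rows and columns. Assume π_α > 0 for every α ∈ {0,1}^K. Then the item response probabilities p_{jα} for all items and the class proportions π_α are identifiable up to a permutation of the class labels. -/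

import Mathlib

open Finset

namespace DCM

lemma sum_pi_bool (n : ℕ) (g : Fin n → Bool → ℝ) :
    ∑ y : Fin n → Bool, ∏ j, g j (y j) = ∏ j, (g j false + g j true) := by
  have h1 : ∏ j, ∑ b : Bool, g j b = ∑ y : Fin n → Bool, ∏ j, g j (y j) :=
    Fintype.prod_sum _
  rw [← h1]
  exact Finset.prod_congr rfl fun j _ => by rw [Fintype.sum_bool]; ring

lemma filter_univ_mem {n : ℕ} (T : Finset (Fin n)) : univ.filter (· ∈ T) = T := by
  ext j; simp

lemma prod_over_finset {n : ℕ} (T : Finset (Fin n)) (h : Fin n → ℝ) :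
    ∏ j ∈ T, h j = ∏ j, (if j ∈ T then h j else 1) := by
  rw [← Finset.prod_filter, filter_univ_mem]

lemma moment_extract {n : ℕ} {ι : Type*} [Fintype ι] (w : ι → ℝ) (q : Fin n → ι → ℝ)
    (T : Finset (Fin n)) :
    ∑ y : Fin n → Bool, (∏ j ∈ T, (if y j then (1:ℝ) else 0)) *
      (∑ i, w i * ∏ j, (if y j then q j i else 1 - q j i)) =
    ∑ i, w i * ∏ j ∈ T, q j i := by
  set G : ι → Fin n → Bool → ℝ := fun i j b =>
    (if j ∈ T then (if b then (1:ℝ) else 0) else 1) * (if b then q j i else 1 - q j i) with hG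
  have swap : ∀ y : Fin n → Bool,
      (∏ j ∈ T, (if y j then (1:ℝ) else 0)) *
        (∑ i, w i * ∏ j, (if y j then q j i else 1 - q j i)) =
      ∑ i, w i * ∏ j, G i j (y j) := by
    intro y
    rw [Finset.mul_sum]
    refine Finset.sum_congr rfl fun i _ => ?_
    have key : (∏ j ∈ T, (if y j then (1:ℝ) else 0)) *
        ∏ j, (if y j then q j i else 1 - q j i) = ∏ j, G i j (y j) := by
      rw [prod_over_finset T (fun j => if y j then (1:ℝ) else 0), ← Finset.prod_mul_distrib]
    rw [← key]; ring
  calc ∑ y : Fin n → Bool, (∏ j ∈ T, (if y j then (1:ℝ) else 0)) *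
        (∑ i, w i * ∏ j, (if y j then q j i else 1 - q j i))
      = ∑ y : Fin n → Bool, ∑ i, w i * ∏ j, G i j (y j) :=
        Finset.sum_congr rfl fun y _ => swap y
    _ = ∑ i, ∑ y : Fin n → Bool, w i * ∏ j, G i j (y j) := Finset.sum_comm
    _ = ∑ i, w i * ∏ j ∈ T, q j i := by
        refine Finset.sum_congr rfl fun i _ => ?_
        rw [← Finset.mul_sum, sum_pi_bool n (G i)]
        congr 1
        rw [prod_over_finset T (fun j => q j i)]
        refine Finset.prod_congr rfl fun j _ => ?_
        by_cases hj : j ∈ T <;> simp [hG, hj]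

lemma kron_inv {K : ℕ} (q : Fin K → Bool → ℝ) (hq : ∀ k, q k true ≠ q k false) :
    ∃ N : Matrix (Fin K → Bool) (Fin K → Bool) ℝ,
      (Matrix.of fun α u : Fin K → Bool => ∏ k, (if u k then q k (α k) else 1)) * N = 1 := by
  have hd0 : ∀ k, q k true - q k false ≠ 0 := fun k => sub_ne_zero.mpr (hq k)
  refine ⟨Matrix.of fun u β : Fin K → Bool => ∏ k,
    ((if u k then (if β k then (1:ℝ) else -1) else (if β k then -(q k false) else q k true)) /
      (q k true - q k false)), ?_⟩
  ext α β
  rw [Matrix.mul_apply]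
  simp only [Matrix.of_apply]
  set g : Fin K → Bool → ℝ := fun k b => (if b then q k (α k) else 1) *
      ((if b then (if β k then (1:ℝ) else -1) else (if β k then -(q k false) else q k true)) /
        (q k true - q k false)) with hg
  have step : ∀ u : Fin K → Bool,
      (∏ k, (if u k then q k (α k) else 1)) * ∏ k,
        ((if u k then (if β k then (1:ℝ) else -1) else (if β k then -(q k false) else q k true)) /
          (q k true - q k false)) = ∏ k, g k (u k) := fun u => (Finset.prod_mul_distrib).symm
  calc ∑ u : Fin K → Bool, (∏ k, (if u k then q k (α k) else 1)) * ∏ k,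
        ((if u k then (if β k then (1:ℝ) else -1) else (if β k then -(q k false) else q k true)) /
          (q k true - q k false))
      = ∑ u : Fin K → Bool, ∏ k, g k (u k) := Finset.sum_congr rfl fun u _ => step u
    _ = ∏ k, (g k false + g k true) := sum_pi_bool K g
    _ = (1 : Matrix (Fin K → Bool) (Fin K → Bool) ℝ) α β := by
        have perk : ∀ k : Fin K, g k false + g k true = if α k = β k then 1 else 0 := by
          intro k
          have hd := hd0 k
          cases hα : α k <;> cases hβ : β k <;>
            simp only [hg, hα, hβ, if_true, if_false, Bool.false_eq_true, Bool.true_eq_false,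
              one_mul, neg_div] <;>
            field_simp <;> ring
        rw [Finset.prod_congr rfl fun k _ => perk k]
        by_cases h : α = β
        · subst h; simp [Matrix.one_apply]
        · rw [Matrix.one_apply_ne h]
          obtain ⟨k, hk⟩ := Function.ne_iff.mp h
          exact Finset.prod_eq_zero (mem_univ k) (by simp [hk])

end DCM

/-- **Identifiability of a DCM whose Q-matrix contains three identity submatrices
(Corollary 1).**
The latent classes are the binary attribute profiles `α : Fin K → Bool`, with class
proportions `π α > 0` and conditional positive response probabilities
`p j α ∈ [0,1]` for `J` binary items. Suppose there are three pairwise disjoint sets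
of `K` items each (encoded by the map `f : Fin 3 → Fin K → Fin J`, injective as a map
on pairs) such that for each attribute `k`, the item `f i k` of the `i`-th set depends
on `α` only through `α k` and takes distinct values for `α k = false` and `α k = true`
(i.e. the Q-matrix contains three distinct `K×K` identity submatrices).
Then the item response probabilities and the class proportions are identifiable up to
a permutation of the class labels. -/
theorem dcm_three_identity_submatrices_identifiability
    (K J : ℕ)
    (p : Fin J → (Fin K → Bool) → ℝ) (π : (Fin K → Bool) → ℝ)
    (hp : ∀ j α, 0 ≤ p j α ∧ p j α ≤ 1)
    (hπ1 : ∑ α, π α = 1)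
    (f : Fin 3 → Fin K → Fin J)
    (hinj : Function.Injective (fun ik : Fin 3 × Fin K => f ik.1 ik.2))
    (hdep : ∀ (i : Fin 3) (k : Fin K), ∀ α α' : Fin K → Bool,
      α k = α' k → p (f i k) α = p (f i k) α')
    (hdist : ∀ (i : Fin 3) (k : Fin K), ∀ α α' : Fin K → Bool,
      α k ≠ α' k → p (f i k) α ≠ p (f i k) α')
    (hπ : ∀ α, 0 < π α) :
    ∀ (p' : Fin J → (Fin K → Bool) → ℝ) (π' : (Fin K → Bool) → ℝ),
      (∀ j α, 0 ≤ p' j α ∧ p' j α ≤ 1) →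
      (∀ α, 0 ≤ π' α) → (∑ α, π' α = 1) →
      (∀ y : Fin J → Bool,
        ∑ α, π α * ∏ j, (if y j then p j α else 1 - p j α) =
        ∑ α, π' α * ∏ j, (if y j then p' j α else 1 - p' j α)) →
      ∃ σ : Equiv.Perm (Fin K → Bool),
        (∀ j α, p' j (σ α) = p j α) ∧ (∀ α, π' (σ α) = π α) := by
  intro p' π' hp' hπ'0 hπ'1 hP
  classical
  -- basic consequences of injectivity of f
  have hfinj : ∀ i : Fin 3, Function.Injective (f i) := by
    intro i k k' h
    have := hinj (a₁ := (i, k)) (a₂ := (i, k')) h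
    exact (Prod.mk.injEq _ _ _ _ ▸ this).2
  have hfne : ∀ (i i' : Fin 3) (k k' : Fin K), i ≠ i' → f i k ≠ f i' k' := by
    intro i i' k k' hii h
    exact hii (congrArg Prod.fst (hinj (a₁ := (i, k)) (a₂ := (i', k')) h))
  -- moments are equal
  have hMom : ∀ T : Finset (Fin J),
      ∑ α, π α * ∏ j ∈ T, p j α = ∑ α, π' α * ∏ j ∈ T, p' j α := by
    intro T
    rw [← DCM.moment_extract π p T, ← DCM.moment_extract π' p' T]
    exact Finset.sum_congr rfl fun y _ => by rw [hP y]
  -- the matrices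
  set A : Matrix (Fin K → Bool) (Fin K → Bool) ℝ :=
    Matrix.of fun α u => ∏ k, (if u k then p (f 0 k) (fun _ => α k) else 1) with hA
  set B : Matrix (Fin K → Bool) (Fin K → Bool) ℝ :=
    Matrix.of fun α u => ∏ k, (if u k then p (f 1 k) (fun _ => α k) else 1) with hB
  set A' : Matrix (Fin K → Bool) (Fin K → Bool) ℝ :=
    Matrix.of fun α u => ∏ k, (if u k then p' (f 0 k) α else 1) with hA'
  set B' : Matrix (Fin K → Bool) (Fin K → Bool) ℝ :=
    Matrix.of fun α u => ∏ k, (if u k then p' (f 1 k) α else 1) with hB'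
  -- row descriptions
  have hArow : ∀ (α u : Fin K → Bool),
      A α u = ∏ j ∈ (univ.filter (fun k => u k)).image (f 0), p j α := by
    intro α u
    rw [Finset.prod_image (fun x _ y _ h => hfinj 0 h), Finset.prod_filter]
    simp only [hA, Matrix.of_apply]
    refine Finset.prod_congr rfl fun k _ => ?_
    by_cases hk : u k
    · rw [if_pos hk, if_pos hk]; exact hdep 0 k _ α rfl
    · rw [if_neg hk, if_neg hk]
  have hBrow : ∀ (α u : Fin K → Bool),
      B α u = ∏ j ∈ (univ.filter (fun k => u k)).image (f 1), p j α := by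
    intro α u
    rw [Finset.prod_image (fun x _ y _ h => hfinj 1 h), Finset.prod_filter]
    simp only [hB, Matrix.of_apply]
    refine Finset.prod_congr rfl fun k _ => ?_
    by_cases hk : u k
    · rw [if_pos hk, if_pos hk]; exact hdep 1 k _ α rfl
    · rw [if_neg hk, if_neg hk]
  have hA'row : ∀ (α u : Fin K → Bool),
      A' α u = ∏ j ∈ (univ.filter (fun k => u k)).image (f 0), p' j α := by
    intro α u
    rw [Finset.prod_image (fun x _ y _ h => hfinj 0 h), Finset.prod_filter]
    rfl
  have hB'row : ∀ (α u : Fin K → Bool),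
      B' α u = ∏ j ∈ (univ.filter (fun k => u k)).image (f 1), p' j α := by
    intro α u
    rw [Finset.prod_image (fun x _ y _ h => hfinj 1 h), Finset.prod_filter]
    rfl
  -- special values
  have hA0 : ∀ α, A α (fun _ => false) = 1 := by intro α; simp [hA]
  have hB0 : ∀ α, B α (fun _ => false) = 1 := by intro α; simp [hB]
  have hA'0 : ∀ α, A' α (fun _ => false) = 1 := by intro α; simp [hA']
  have hB'0 : ∀ α, B' α (fun _ => false) = 1 := by intro α; simp [hB']
  have hAk : ∀ (α : Fin K → Bool) (k : Fin K),
      A α (fun k' => k' == k) = p (f 0 k) α := by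
    intro α k
    simp only [hA, Matrix.of_apply]
    rw [Finset.prod_eq_single k (fun b _ hb => by simp [hb]) (by simp)]
    simp only [beq_self_eq_true, if_true]
    exact hdep 0 k _ α rfl
  have hBk : ∀ (α : Fin K → Bool) (k : Fin K),
      B α (fun k' => k' == k) = p (f 1 k) α := by
    intro α k
    simp only [hB, Matrix.of_apply]
    rw [Finset.prod_eq_single k (fun b _ hb => by simp [hb]) (by simp)]
    simp only [beq_self_eq_true, if_true]
    exact hdep 1 k _ α rfl
  have hA'k : ∀ (α : Fin K → Bool) (k : Fin K),
      A' α (fun k' => k' == k) = p' (f 0 k) α := by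
    intro α k
    simp only [hA', Matrix.of_apply]
    rw [Finset.prod_eq_single k (fun b _ hb => by simp [hb]) (by simp)]
    simp
  have hB'k : ∀ (α : Fin K → Bool) (k : Fin K),
      B' α (fun k' => k' == k) = p' (f 1 k) α := by
    intro α k
    simp only [hB', Matrix.of_apply]
    rw [Finset.prod_eq_single k (fun b _ hb => by simp [hb]) (by simp)]
    simp
  -- entry formula
  have entry : ∀ (X Y : Matrix (Fin K → Bool) (Fin K → Bool) ℝ) (d : (Fin K → Bool) → ℝ)
      (u v : Fin K → Bool),
      (X.transpose * Matrix.diagonal d * Y) u v = ∑ α, X α u * d α * Y α v := by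
    intro X Y d u v
    rw [Matrix.mul_apply]
    refine Finset.sum_congr rfl fun α _ => ?_
    rw [Matrix.mul_diagonal, Matrix.transpose_apply]
  -- the matrix equation
  have hMat : ∀ S : Finset (Fin J), (∀ k, f 0 k ∉ S ∧ f 1 k ∉ S) →
      A.transpose * Matrix.diagonal (fun α => π α * ∏ j ∈ S, p j α) * B =
      A'.transpose * Matrix.diagonal (fun α => π' α * ∏ j ∈ S, p' j α) * B' := by
    intro S hS
    ext u v
    rw [entry, entry]
    have d2 : Disjoint ((univ.filter (fun k => v k)).image (f 1)) S := by
      rw [Finset.disjoint_left]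
      intro a ha haS
      obtain ⟨k, _, rfl⟩ := Finset.mem_image.mp ha
      exact (hS k).2 haS
    have d1 : Disjoint ((univ.filter (fun k => u k)).image (f 0))
        (((univ.filter (fun k => v k)).image (f 1)) ∪ S) := by
      rw [Finset.disjoint_left]
      intro a ha haS
      obtain ⟨k, _, rfl⟩ := Finset.mem_image.mp ha
      rcases Finset.mem_union.mp haS with h' | h'
      · obtain ⟨k', _, h''⟩ := Finset.mem_image.mp h'
        exact hfne 1 0 k' k (by decide) h''
      · exact (hS k).1 h'
    have hT := hMom (((univ.filter (fun k => u k)).image (f 0)) ∪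
      (((univ.filter (fun k => v k)).image (f 1)) ∪ S))
    calc ∑ α, A α u * (π α * ∏ j ∈ S, p j α) * B α v
        = ∑ α, π α * ∏ j ∈ (((univ.filter (fun k => u k)).image (f 0)) ∪
            (((univ.filter (fun k => v k)).image (f 1)) ∪ S)), p j α := by
          refine Finset.sum_congr rfl fun α _ => ?_
          rw [Finset.prod_union d1, Finset.prod_union d2, hArow, hBrow]
          ring
      _ = ∑ α, π' α * ∏ j ∈ (((univ.filter (fun k => u k)).image (f 0)) ∪
            (((univ.filter (fun k => v k)).image (f 1)) ∪ S)), p' j α := hT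
      _ = ∑ α, A' α u * (π' α * ∏ j ∈ S, p' j α) * B' α v := by
          refine Finset.sum_congr rfl fun α _ => ?_
          rw [Finset.prod_union d1, Finset.prod_union d2, hA'row, hB'row]
          ring
  -- invertibility of A and B
  obtain ⟨NA, hNA0⟩ := DCM.kron_inv (fun k b => p (f 0 k) (fun _ => b))
    (fun k => hdist 0 k _ _ (by simp))
  obtain ⟨NB, hNB0⟩ := DCM.kron_inv (fun k b => p (f 1 k) (fun _ => b))
    (fun k => hdist 1 k _ _ (by simp))
  have hNA : A * NA = 1 := hNA0
  have hNB : B * NB = 1 := hNB0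
  have hdetA : IsUnit A.det := by
    have h := Matrix.det_mul A NA
    rw [hNA, Matrix.det_one] at h
    exact IsUnit.of_mul_eq_one _ h.symm
  have hdetB : IsUnit B.det := by
    have h := Matrix.det_mul B NB
    rw [hNB, Matrix.det_one] at h
    exact IsUnit.of_mul_eq_one _ h.symm
  -- S = ∅ equation
  have hM0 : A.transpose * Matrix.diagonal π * B =
      A'.transpose * Matrix.diagonal π' * B' := by
    have h := hMat ∅ (fun k => ⟨Finset.notMem_empty _, Finset.notMem_empty _⟩)
    simpa using h
  have hπne : ∀ α, π α ≠ 0 := fun α => ne_of_gt (hπ α)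
  have hdetM : IsUnit (A.transpose * Matrix.diagonal π * B).det := by
    rw [Matrix.det_mul, Matrix.det_mul, Matrix.det_transpose, Matrix.det_diagonal]
    exact (hdetA.mul (isUnit_iff_ne_zero.mpr (Finset.prod_ne_zero_iff.mpr
      fun α _ => hπne α))).mul hdetB
  have hdet' : A'.det ≠ 0 ∧ (∏ α, π' α) ≠ 0 ∧ B'.det ≠ 0 := by
    have h := hdetM
    rw [hM0, Matrix.det_mul, Matrix.det_mul, Matrix.det_transpose, Matrix.det_diagonal] at h
    have h' := isUnit_iff_ne_zero.mp h
    refine ⟨?_, ?_, ?_⟩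
    · intro h0; apply h'; rw [h0]; ring
    · intro h0; apply h'; rw [h0]; ring
    · intro h0; apply h'; rw [h0]; ring
  have hdetA' : IsUnit A'.det := isUnit_iff_ne_zero.mpr hdet'.1
  have hdetB' : IsUnit B'.det := isUnit_iff_ne_zero.mpr hdet'.2.2
  have hπ'ne : ∀ α, π' α ≠ 0 := fun α =>
    Finset.prod_ne_zero_iff.mp hdet'.2.1 α (mem_univ α)
  have hdetAt : IsUnit A.transpose.det := by rw [Matrix.det_transpose]; exact hdetA
  have hdetA't : IsUnit A'.transpose.det := by rw [Matrix.det_transpose]; exact hdetA'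
  -- U
  set U : Matrix (Fin K → Bool) (Fin K → Bool) ℝ := A'.transpose⁻¹ * A.transpose with hU
  have hU1 : A'.transpose * U = A.transpose :=
    Matrix.mul_nonsing_inv_cancel_left _ _ hdetA't
  have hDpiB : IsUnit (Matrix.diagonal π * B).det := by
    rw [Matrix.det_mul, Matrix.det_diagonal]
    exact (isUnit_iff_ne_zero.mpr (Finset.prod_ne_zero_iff.mpr fun α _ => hπne α)).mul hdetB
  have hDB : Matrix.diagonal π' * B' = U * (Matrix.diagonal π * B) := by
    have h : A'.transpose * (Matrix.diagonal π' * B') =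
        A'.transpose * (U * (Matrix.diagonal π * B)) := by
      calc A'.transpose * (Matrix.diagonal π' * B')
          = A'.transpose * Matrix.diagonal π' * B' := by rw [Matrix.mul_assoc]
        _ = A.transpose * Matrix.diagonal π * B := hM0.symm
        _ = A'.transpose * (U * (Matrix.diagonal π * B)) := by
            rw [← hU1]; simp only [Matrix.mul_assoc]
    calc Matrix.diagonal π' * B'
        = A'.transpose⁻¹ * (A'.transpose * (Matrix.diagonal π' * B')) :=
          (Matrix.nonsing_inv_mul_cancel_left _ _ hdetA't).symm
      _ = A'.transpose⁻¹ * (A'.transpose * (U * (Matrix.diagonal π * B))) := by rw [h]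
      _ = U * (Matrix.diagonal π * B) := Matrix.nonsing_inv_mul_cancel_left _ _ hdetA't
  -- key commutation relation
  have hKey : ∀ S : Finset (Fin J), (∀ k, f 0 k ∉ S ∧ f 1 k ∉ S) →
      U * Matrix.diagonal (fun α => ∏ j ∈ S, p j α) =
      Matrix.diagonal (fun α => ∏ j ∈ S, p' j α) * U := by
    intro S hS
    have e1 : Matrix.diagonal (fun α => π α * ∏ j ∈ S, p j α) =
        Matrix.diagonal (fun α => ∏ j ∈ S, p j α) * Matrix.diagonal π := by
      rw [Matrix.diagonal_mul_diagonal]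
      refine congrArg Matrix.diagonal (funext fun α => ?_)
      simp [mul_comm]
    have e1' : Matrix.diagonal (fun α => π' α * ∏ j ∈ S, p' j α) =
        Matrix.diagonal (fun α => ∏ j ∈ S, p' j α) * Matrix.diagonal π' := by
      rw [Matrix.diagonal_mul_diagonal]
      refine congrArg Matrix.diagonal (funext fun α => ?_)
      simp [mul_comm]
    have h2 : A'.transpose * (U * Matrix.diagonal (fun α => ∏ j ∈ S, p j α) *
        (Matrix.diagonal π * B)) =
        A'.transpose * (Matrix.diagonal (fun α => ∏ j ∈ S, p' j α) * U *
        (Matrix.diagonal π * B)) := by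
      calc A'.transpose * (U * Matrix.diagonal (fun α => ∏ j ∈ S, p j α) *
            (Matrix.diagonal π * B))
          = (A'.transpose * U) * Matrix.diagonal (fun α => ∏ j ∈ S, p j α) *
            Matrix.diagonal π * B := by
            simp only [Matrix.mul_assoc]
        _ = A.transpose * Matrix.diagonal (fun α => π α * ∏ j ∈ S, p j α) * B := by
            rw [hU1, e1]; simp only [Matrix.mul_assoc]
        _ = A'.transpose * Matrix.diagonal (fun α => π' α * ∏ j ∈ S, p' j α) * B' :=
            hMat S hS
        _ = A'.transpose * (Matrix.diagonal (fun α => ∏ j ∈ S, p' j α) *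
            (Matrix.diagonal π' * B')) := by
            rw [e1']; simp only [Matrix.mul_assoc]
        _ = A'.transpose * (Matrix.diagonal (fun α => ∏ j ∈ S, p' j α) * U *
            (Matrix.diagonal π * B)) := by
            rw [hDB]; simp only [Matrix.mul_assoc]
    have h3 : U * Matrix.diagonal (fun α => ∏ j ∈ S, p j α) * (Matrix.diagonal π * B) =
        Matrix.diagonal (fun α => ∏ j ∈ S, p' j α) * U * (Matrix.diagonal π * B) := by
      calc U * Matrix.diagonal (fun α => ∏ j ∈ S, p j α) * (Matrix.diagonal π * B)
          = A'.transpose⁻¹ * (A'.transpose * (U * Matrix.diagonal (fun α => ∏ j ∈ S, p j α) *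
            (Matrix.diagonal π * B))) :=
            (Matrix.nonsing_inv_mul_cancel_left _ _ hdetA't).symm
        _ = A'.transpose⁻¹ * (A'.transpose * (Matrix.diagonal (fun α => ∏ j ∈ S, p' j α) * U *
            (Matrix.diagonal π * B))) := by rw [h2]
        _ = Matrix.diagonal (fun α => ∏ j ∈ S, p' j α) * U * (Matrix.diagonal π * B) :=
            Matrix.nonsing_inv_mul_cancel_left _ _ hdetA't
    calc U * Matrix.diagonal (fun α => ∏ j ∈ S, p j α)
        = U * Matrix.diagonal (fun α => ∏ j ∈ S, p j α) * (Matrix.diagonal π * B) *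
          (Matrix.diagonal π * B)⁻¹ :=
          (Matrix.mul_nonsing_inv_cancel_right _ _ hDpiB).symm
      _ = Matrix.diagonal (fun α => ∏ j ∈ S, p' j α) * U * (Matrix.diagonal π * B) *
          (Matrix.diagonal π * B)⁻¹ := by rw [h3]
      _ = Matrix.diagonal (fun α => ∏ j ∈ S, p' j α) * U :=
          Matrix.mul_nonsing_inv_cancel_right _ _ hDpiB
  have hKeyE : ∀ S : Finset (Fin J), (∀ k, f 0 k ∉ S ∧ f 1 k ∉ S) →
      ∀ β α', U β α' * (∏ j ∈ S, p j α') = (∏ j ∈ S, p' j β) * U β α' := by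
    intro S hS β α'
    have h := congrArg (fun M => M β α') (hKey S hS)
    simpa [Matrix.mul_diagonal, Matrix.diagonal_mul] using h
  -- U is (essentially) a permutation matrix
  have hUdet : IsUnit U.det := by
    rw [hU, Matrix.det_mul]
    exact ((Matrix.isUnit_nonsing_inv_det _ hdetA't)).mul hdetAt
  have hcol : ∀ α', ∃ β, U β α' ≠ 0 := by
    intro α'
    by_contra h
    push_neg at h
    exact isUnit_iff_ne_zero.mp hUdet (Matrix.det_eq_zero_of_column_eq_zero α' h)
  have hAdm2 : ∀ k : Fin K, ∀ k', f 0 k' ∉ ({f 2 k} : Finset (Fin J)) ∧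
      f 1 k' ∉ ({f 2 k} : Finset (Fin J)) := by
    intro k k'
    constructor <;> intro hmem <;> rw [Finset.mem_singleton] at hmem
    · exact hfne 0 2 k' k (by decide) hmem
    · exact hfne 1 2 k' k (by decide) hmem
  have hrow : ∀ β α₁ α₂, U β α₁ ≠ 0 → U β α₂ ≠ 0 → α₁ = α₂ := by
    intro β α₁ α₂ h₁ h₂
    by_contra hne
    obtain ⟨k, hk⟩ := Function.ne_iff.mp hne
    have e₁ := hKeyE {f 2 k} (hAdm2 k) β α₁
    have e₂ := hKeyE {f 2 k} (hAdm2 k) β α₂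
    rw [Finset.prod_singleton, Finset.prod_singleton] at e₁ e₂
    have v₁ : p (f 2 k) α₁ = p' (f 2 k) β :=
      mul_left_cancel₀ h₁ (e₁.trans (mul_comm _ _))
    have v₂ : p (f 2 k) α₂ = p' (f 2 k) β :=
      mul_left_cancel₀ h₂ (e₂.trans (mul_comm _ _))
    exact hdist 2 k α₁ α₂ hk (v₁.trans v₂.symm)
  choose r hr using hcol
  have hrinj : Function.Injective r := fun α₁ α₂ h =>
    hrow (r α₁) α₁ α₂ (hr α₁) (h ▸ hr α₂)
  have hrbij : Function.Bijective r := Finite.injective_iff_bijective.mp hrinj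
  have hroff : ∀ α' β, β ≠ r α' → U β α' = 0 := by
    intro α' β hβ
    by_contra h
    obtain ⟨α'', hα''⟩ := hrbij.2 β
    exact hβ (by rw [hrow β α' α'' h (hα'' ▸ hr α''), hα''])
  -- A' rows are A rows
  have hAA' : ∀ α u, A α u = A' (r α) u * U (r α) α := by
    intro α u
    have h := congrArg (fun M => M u α) hU1
    simp only [Matrix.mul_apply, Matrix.transpose_apply] at h
    rw [← h]
    exact Finset.sum_eq_single (r α)
      (fun β _ hβ => by rw [hroff α β hβ, mul_zero]) (by simp)
  have hUone : ∀ α, U (r α) α = 1 := by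
    intro α
    have h := hAA' α (fun _ => false)
    rw [hA0, hA'0, one_mul] at h
    exact h.symm
  have hA'eq : ∀ α u, A' (r α) u = A α u := by
    intro α u
    rw [hAA' α u, hUone, mul_one]
  have hC'eq : ∀ S : Finset (Fin J), (∀ k, f 0 k ∉ S ∧ f 1 k ∉ S) →
      ∀ α, (∏ j ∈ S, p' j (r α)) = ∏ j ∈ S, p j α := by
    intro S hS α
    have h := hKeyE S hS (r α) α
    rw [hUone, one_mul, mul_one] at h
    exact h.symm
  -- identify π' and B'
  have hYzero : ∀ α v, π α * B α v = π' (r α) * B' (r α) v := by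
    have hsum : ∀ u v, ∑ α, A α u * (π α * B α v) =
        ∑ α, A α u * (π' (r α) * B' (r α) v) := by
      intro u v
      have h : ∑ α, A α u * π α * B α v = ∑ β, A' β u * π' β * B' β v := by
        have h0 := congrArg (fun M => M u v) hM0
        simpa only [entry] using h0
      have hre : ∑ α, A' (r α) u * π' (r α) * B' (r α) v =
          ∑ β, A' β u * π' β * B' β v :=
        Fintype.sum_bijective r hrbij _ _ (fun α => rfl)
      calc ∑ α, A α u * (π α * B α v) = ∑ α, A α u * π α * B α v := by
            refine Finset.sum_congr rfl fun α _ => ?_; ring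
        _ = ∑ β, A' β u * π' β * B' β v := h
        _ = ∑ α, A' (r α) u * π' (r α) * B' (r α) v := hre.symm
        _ = ∑ α, A α u * (π' (r α) * B' (r α) v) := by
            refine Finset.sum_congr rfl fun α _ => ?_
            rw [hA'eq]; ring
    set Y : Matrix (Fin K → Bool) (Fin K → Bool) ℝ :=
      Matrix.of fun α v => π α * B α v - π' (r α) * B' (r α) v with hY
    have hAY : A.transpose * Y = 0 := by
      ext u v
      rw [Matrix.mul_apply]
      simp only [Matrix.transpose_apply, hY, Matrix.of_apply, Matrix.zero_apply]
      have : ∀ α : Fin K → Bool, A α u * (π α * B α v - π' (r α) * B' (r α) v) =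
          A α u * (π α * B α v) - A α u * (π' (r α) * B' (r α) v) := fun α => by ring
      rw [Finset.sum_congr rfl fun α _ => this α, Finset.sum_sub_distrib,
        hsum u v, sub_self]
    have hY0 : Y = 0 := by
      have h := congrArg (fun M => A.transpose⁻¹ * M) hAY
      simpa [Matrix.nonsing_inv_mul_cancel_left _ _ hdetAt, Matrix.mul_zero] using h
    intro α v
    have h := congrArg (fun M => M α v) hY0
    simpa [hY, sub_eq_zero] using h
  have hπeq : ∀ α, π' (r α) = π α := by
    intro α
    have h := hYzero α (fun _ => false)
    rw [hB0, hB'0, mul_one, mul_one] at h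
    exact h.symm
  have hB'eq : ∀ α v, B' (r α) v = B α v := by
    intro α v
    have h := hYzero α v
    rw [hπeq] at h
    exact (mul_left_cancel₀ (hπne α) h).symm
  -- conclusion
  refine ⟨Equiv.ofBijective r hrbij, fun j α => ?_, fun α => hπeq α⟩
  show p' j (r α) = p j α
  by_cases h0 : ∃ k, f 0 k = j
  · obtain ⟨k, rfl⟩ := h0
    rw [← hA'k (r α) k, hA'eq, hAk]
  · by_cases h1 : ∃ k, f 1 k = j
    · obtain ⟨k, rfl⟩ := h1
      rw [← hB'k (r α) k, hB'eq, hBk]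
    · have hS : ∀ k, f 0 k ∉ ({j} : Finset (Fin J)) ∧ f 1 k ∉ ({j} : Finset (Fin J)) := by
        intro k
        constructor <;> intro hmem <;> rw [Finset.mem_singleton] at hmem
        · exact h0 ⟨k, hmem⟩
        · exact h1 ⟨k, hmem⟩
      have h := hC'eq {j} hS α
      rw [Finset.prod_singleton, Finset.prod_singleton] at h
      exact h
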